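/- Let n ≥ 1 and σ ∈ B_n. Then the numbers f_i(σ) satisfy: (1) f_1(σ) ≥ f_2(σ) ≥ ⋯ ≥ f_n(σ); and (2) if 1 ≤ i < j ≤ n and f_i(σ) = f_j(σ), then σ(i) < σ(i+1) < ⋯ < σ(j) and all of the numbers σ(i), σ(i+1), …, σ(j) have the same sign. -/

import Mathlib

open MvPolynomial

/-- The hyperoctahedral group `Bₙ`, realized as the subgroup of permutations of `ℤ`
that commute with negation and fix every integer of absolute value greater than `n`.
Such a permutation restricts to a bijection `σ` of `{-n,…,-1,1,…,n}` with
`σ(-k) = -σ(k)`, and every such bijection arises from a unique element. -/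
def HOct (n : ℕ) : Subgroup (Equiv.Perm ℤ) where
  carrier := {σ | (∀ k : ℤ, σ (-k) = -(σ k)) ∧ ∀ k : ℤ, (n : ℤ) < |k| → σ k = k}
  one_mem' := by
    refine ⟨fun k => rfl, fun k _ => rfl⟩
  mul_mem' := by
    rintro σ τ ⟨hσ1, hσ2⟩ ⟨hτ1, hτ2⟩
    refine ⟨fun k => ?_, fun k hk => ?_⟩
    · simp [Equiv.Perm.mul_apply, hτ1, hσ1]
    · simp [Equiv.Perm.mul_apply, hτ2 k hk, hσ2 k hk]
  inv_mem' := by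
    rintro σ ⟨h1, h2⟩
    refine ⟨fun k => ?_, fun k hk => ?_⟩
    · apply σ.injective
      rw [show σ (σ⁻¹ (-k)) = -k from σ.apply_symm_apply (-k), h1,
        show σ (σ⁻¹ k) = k from σ.apply_symm_apply k]
    · have h := h2 k hk
      nth_rewrite 1 [← h]
      rw [show σ⁻¹ (σ k) = k from σ.symm_apply_apply k]

/-- The descent set `Des(σ) = {1 ≤ i ≤ n-1 : σ(i) > σ(i+1)}`. -/
def DesB (n : ℕ) (σ : Equiv.Perm ℤ) : Finset ℕ :=
  (Finset.Ico 1 n).filter fun i => σ ((i : ℤ) + 1) < σ (i : ℤ)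

/-- `d_i(σ) = #{j ∈ Des(σ) : j ≥ i}`. -/
def dB (n : ℕ) (σ : Equiv.Perm ℤ) (i : ℕ) : ℕ :=
  ((DesB n σ).filter fun j => i ≤ j).card

/-- `ε_i(σ)`: `1` if `σ(i) < 0`, `0` otherwise. -/
def epsB (σ : Equiv.Perm ℤ) (i : ℕ) : ℕ := if σ (i : ℤ) < 0 then 1 else 0

/-- `f_i(σ) = 2 d_i(σ) + ε_i(σ)`. -/
def fB (n : ℕ) (σ : Equiv.Perm ℤ) (i : ℕ) : ℕ := 2 * dB n σ i + epsB σ i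

/-- The sign `σ(k)/|σ(k)|` as a rational number. -/
def sgnQ (σ : Equiv.Perm ℤ) (k : ℤ) : ℚ := if σ k < 0 then -1 else 1

/-- For `i : Fin n` (representing the index `i+1 ∈ {1,…,n}`), the element of `Fin n`
representing `|σ(i+1)| ∈ {1,…,n}`. -/
def sIdx {n : ℕ} (σ : Equiv.Perm ℤ) (i : Fin n) : Fin n :=
  ⟨((σ ((i : ℕ) + 1 : ℤ)).natAbs - 1) % n, Nat.mod_lt _ i.pos⟩

/-- The diagonal action of a signed permutation on `ℚ[x₁,…,xₙ,y₁,…,yₙ]`: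
`x_k ↦ (σ(k)/|σ(k)|)·x_{|σ(k)|}` and `y_k ↦ (σ(k)/|σ(k)|)·y_{|σ(k)|}`.
Here `Sum.inl i` is the variable `x_{i+1}` and `Sum.inr i` is `y_{i+1}`. -/
noncomputable def actXY (n : ℕ) (σ : Equiv.Perm ℤ) :
    MvPolynomial (Fin n ⊕ Fin n) ℚ →ₐ[ℚ] MvPolynomial (Fin n ⊕ Fin n) ℚ :=
  aeval (Sum.elim
    (fun i => C (sgnQ σ ((i : ℕ) + 1 : ℤ)) * X (Sum.inl (sIdx σ i)))
    (fun i => C (sgnQ σ ((i : ℕ) + 1 : ℤ)) * X (Sum.inr (sIdx σ i))))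

/-- Action of a signed permutation on the `x`-variables only. -/
noncomputable def actX (n : ℕ) (σ : Equiv.Perm ℤ) :
    MvPolynomial (Fin n ⊕ Fin n) ℚ →ₐ[ℚ] MvPolynomial (Fin n ⊕ Fin n) ℚ :=
  aeval (Sum.elim
    (fun i => C (sgnQ σ ((i : ℕ) + 1 : ℤ)) * X (Sum.inl (sIdx σ i)))
    (fun i => X (Sum.inr i)))

/-- Action of a signed permutation on the `y`-variables only. -/
noncomputable def actY (n : ℕ) (σ : Equiv.Perm ℤ) :
    MvPolynomial (Fin n ⊕ Fin n) ℚ →ₐ[ℚ] MvPolynomial (Fin n ⊕ Fin n) ℚ :=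
  aeval (Sum.elim
    (fun i => X (Sum.inl i))
    (fun i => C (sgnQ σ ((i : ℕ) + 1 : ℤ)) * X (Sum.inr (sIdx σ i))))

/-- The averaging operator `ρ(f) = (1/|Bₙ|) ∑_{σ ∈ Bₙ} σ·f`. -/
noncomputable def rho (n : ℕ) (f : MvPolynomial (Fin n ⊕ Fin n) ℚ) :
    MvPolynomial (Fin n ⊕ Fin n) ℚ :=
  (Nat.card ↥(HOct n) : ℚ)⁻¹ • ∑ᶠ σ : ↥(HOct n), actXY n (σ : Equiv.Perm ℤ) f

/-- The diagonal signed descent monomial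
`c_σ = ∏_{i=1}^n x_i^{f_i(σ⁻¹)} y_i^{f_{|σ⁻¹(i)|}(σ)}`. -/
noncomputable def cMon (n : ℕ) (σ : Equiv.Perm ℤ) : MvPolynomial (Fin n ⊕ Fin n) ℚ :=
  ∏ i : Fin n,
    (X (Sum.inl i) ^ fB n σ⁻¹ ((i : ℕ) + 1) *
      X (Sum.inr i) ^ fB n σ ((σ⁻¹ ((i : ℕ) + 1 : ℤ)).natAbs))

/-- The monomial `x^p y^q`. -/
noncomputable def monXY (n : ℕ) (p q : Fin n → ℕ) : MvPolynomial (Fin n ⊕ Fin n) ℚ :=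
  (∏ i : Fin n, X (Sum.inl i) ^ p i) * ∏ i : Fin n, X (Sum.inr i) ^ q i

/-- The monomial `x^p y^q` is ordered (belongs to `𝒪ₙ`). -/
def OrderedMon (n : ℕ) (p q : Fin n → ℕ) : Prop :=
  (∀ k, Even (p k + q k)) ∧ Antitone p ∧
  (∀ (i : Fin n) (h : (i : ℕ) + 1 < n),
    p i = p ⟨(i : ℕ) + 1, h⟩ → Even (p i) → q ⟨(i : ℕ) + 1, h⟩ ≤ q i) ∧
  (∀ (i : Fin n) (h : (i : ℕ) + 1 < n),
    p i = p ⟨(i : ℕ) + 1, h⟩ → Odd (p i) → q i ≤ q ⟨(i : ℕ) + 1, h⟩)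

/-- `σ` is the signed index permutation of a monomial with `y`-exponent sequence `q`:
(1) `q_{|σ(1)|} ≥ ⋯ ≥ q_{|σ(n)|}`; (2) ties `q_{|σ(i)|} = q_{|σ(j)|}` (`i < j`) force
`σ(i) < σ(i+1) < ⋯ < σ(j)`; (3) `q_{|σ(i)|}` is even iff `σ(i) > 0`. -/
def IsSignedIndexPerm (n : ℕ) (q : Fin n → ℕ) (σ : Equiv.Perm ℤ) : Prop :=
  σ ∈ HOct n ∧
  Antitone (fun i : Fin n => q (sIdx σ i)) ∧
  (∀ i j : Fin n, i < j → q (sIdx σ i) = q (sIdx σ j) →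
    ∀ k l : Fin n, i ≤ k → k < l → l ≤ j →
      σ ((k : ℕ) + 1 : ℤ) < σ ((l : ℕ) + 1 : ℤ)) ∧
  (∀ i : Fin n, Even (q (sIdx σ i)) ↔ 0 < σ ((i : ℕ) + 1 : ℤ))

/-- `𝔰(q) = q` if `q` is even, `-q` if `q` is odd. -/
def sFun (q : ℕ) : ℤ := if Even q then (q : ℤ) else -(q : ℤ)

/-- The decreasing rearrangement `𝔬(q)` of a sequence `q`. -/
def oArr {n : ℕ} (q : Fin n → ℕ) : Fin n → ℕ := fun i => q (Tuple.sort q i.rev)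

/-- Strict lexicographic comparison of sequences. -/
def LexLT {n : ℕ} {α : Type*} [LT α] (a b : Fin n → α) : Prop :=
  ∃ i, (∀ j, j < i → a j = b j) ∧ a i < b i

/-- The monomial `x^{p'} y^{q'}` strictly precedes `x^p y^q` in the total order `≼` on
ordered monomials: either `𝔬(x^{p'}y^{q'}) <_ℓ 𝔬(x^p y^q)` lexicographically, or the
`𝔬`-data agree and `(p', 𝔰(q')) <_ℓ (p, 𝔰(q))` lexicographically. -/
def MonPrec {n : ℕ} (p' q' p q : Fin n → ℕ) : Prop :=
  LexLT (oArr p') (oArr p) ∨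
  (oArr p' = oArr p ∧ LexLT (oArr q') (oArr q)) ∨
  (oArr p' = oArr p ∧ oArr q' = oArr q ∧
    (LexLT p' p ∨ (p' = p ∧ LexLT (fun i => sFun (q' i)) (fun i => sFun (q i)))))

/-- The monomial symmetric polynomial `m_{2ν}(x) = ∑_{[α] ∈ Σₙ/Σₙ(ν)} x^{2α(ν)}`,
i.e. the sum of all distinct monomials `x^{2w}` with `w` a rearrangement of `ν`. -/
noncomputable def mSymX (n : ℕ) (ν : Fin n → ℕ) : MvPolynomial (Fin n ⊕ Fin n) ℚ :=
  ∑ w ∈ Finset.image (fun α : Equiv.Perm (Fin n) => ν ∘ α) Finset.univ,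
    ∏ i : Fin n, X (Sum.inl i) ^ (2 * w i)

/-- The monomial symmetric polynomial `m_{2μ}(y)`. -/
noncomputable def mSymY (n : ℕ) (μ : Fin n → ℕ) : MvPolynomial (Fin n ⊕ Fin n) ℚ :=
  ∑ w ∈ Finset.image (fun α : Equiv.Perm (Fin n) => μ ∘ α) Finset.univ,
    ∏ i : Fin n, X (Sum.inr i) ^ (2 * w i)

/-- The action of a signed permutation on `ℚ[x₁,…,xₙ]`:
`x_k ↦ (σ(k)/|σ(k)|)·x_{|σ(k)|}`. Here the variable `i : Fin n` is `x_{i+1}`. -/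
noncomputable def actB (n : ℕ) (σ : Equiv.Perm ℤ) :
    MvPolynomial (Fin n) ℚ →ₐ[ℚ] MvPolynomial (Fin n) ℚ :=
  aeval fun i => C (sgnQ σ ((i : ℕ) + 1 : ℤ)) * X (sIdx σ i)

/-- The signed descent monomial `b_σ = ∏_{i=1}^n x_i^{f_{|σ⁻¹(i)|}(σ)}`. -/
noncomputable def bMon (n : ℕ) (σ : Equiv.Perm ℤ) : MvPolynomial (Fin n) ℚ :=
  ∏ i : Fin n, X i ^ fB n σ ((σ⁻¹ ((i : ℕ) + 1 : ℤ)).natAbs)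

lemma dB_step (n : ℕ) (σ : Equiv.Perm ℤ) (k : ℕ) :
    dB n σ k = dB n σ (k + 1) + if k ∈ DesB n σ then 1 else 0 := by
  unfold dB
  have hsplit : (DesB n σ).filter (fun j => k ≤ j)
      = ((DesB n σ).filter (fun j => k + 1 ≤ j)) ∪ ((DesB n σ).filter (fun j => j = k)) := by
    ext j
    simp only [Finset.mem_filter, Finset.mem_union]
    constructor
    · rintro ⟨hj, h⟩
      rcases Nat.lt_or_ge j (k+1) with h' | h'
      · exact Or.inr ⟨hj, by omega⟩
      · exact Or.inl ⟨hj, h'⟩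
    · rintro (⟨hj, h⟩ | ⟨hj, h⟩) <;> exact ⟨hj, by omega⟩
  have hdisj : Disjoint ((DesB n σ).filter (fun j => k + 1 ≤ j))
      ((DesB n σ).filter (fun j => j = k)) := by
    rw [Finset.disjoint_left]
    intro a ha hb
    simp only [Finset.mem_filter] at ha hb
    omega
  rw [hsplit, Finset.card_union_of_disjoint hdisj, Finset.filter_eq']
  split_ifs <;> simp

lemma fB_consec (n : ℕ) (σ : Equiv.Perm ℤ) (k : ℕ) (hk1 : 1 ≤ k) (hkn : k < n) :
    fB n σ (k + 1) ≤ fB n σ k ∧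
    (fB n σ k = fB n σ (k + 1) →
      σ (k : ℤ) < σ ((k : ℤ) + 1) ∧ (σ (k : ℤ) < 0 ↔ σ ((k : ℤ) + 1) < 0)) := by
  have hmem : k ∈ DesB n σ ↔ σ ((k : ℤ) + 1) < σ (k : ℤ) := by
    simp [DesB, Finset.mem_filter, Finset.mem_Ico, hk1, hkn]
  have hne : σ (k : ℤ) ≠ σ ((k : ℤ) + 1) := by
    intro h
    have := σ.injective h
    omega
  have hd := dB_step n σ k
  have hcast : ((k : ℤ) + 1) = ((k + 1 : ℕ) : ℤ) := by push_cast; ring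
  by_cases hdes : k ∈ DesB n σ
  · -- descent: strict drop in fB
    rw [if_pos hdes] at hd
    unfold fB epsB
    rw [hcast]
    constructor
    · split_ifs <;> omega
    · intro h
      split_ifs at h <;> omega
  · rw [if_neg hdes] at hd
    have hlt : σ (k : ℤ) < σ ((k : ℤ) + 1) := by
      rw [hmem] at hdes
      omega
    have hsg : σ ((k : ℤ) + 1) < 0 → σ (k : ℤ) < 0 := fun h => lt_trans hlt h
    unfold fB epsB
    rw [hcast] at hlt hsg ⊢
    constructor
    · split_ifs <;> first | omega | (exfalso; omega)
    · intro h
      refine ⟨hlt, ?_⟩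
      split_ifs at h with h1 h2 h2 <;> constructor <;> intro hh <;>
        first | assumption | omega | exact absurd hh h1 | exact absurd hh h2 |
          (exact absurd (hsg hh) h1)

/-- Properties of the numbers `f_i(σ)` for `σ ∈ Bₙ`:
(1) `f_1(σ) ≥ f_2(σ) ≥ ⋯ ≥ f_n(σ)`; (2) if `i < j` and `f_i(σ) = f_j(σ)` then
`σ(i) < σ(i+1) < ⋯ < σ(j)` and all of `σ(i), …, σ(j)` have the same sign. -/
theorem fB_properties (n : ℕ) (hn : 1 ≤ n) (σ : Equiv.Perm ℤ) (hσ : σ ∈ HOct n) :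
    (∀ i j : ℕ, 1 ≤ i → i ≤ j → j ≤ n → fB n σ j ≤ fB n σ i) ∧
    (∀ i j : ℕ, 1 ≤ i → i < j → j ≤ n → fB n σ i = fB n σ j →
      (∀ k l : ℕ, i ≤ k → k < l → l ≤ j → σ (k : ℤ) < σ (l : ℤ)) ∧
      (∀ k : ℕ, i ≤ k → k ≤ j → (0 < σ (k : ℤ) ↔ 0 < σ (i : ℤ)))) := by
  have hσ0 : σ (0 : ℤ) = 0 := by
    have h := hσ.1 0
    simp at h
    omega
  have hne0 : ∀ k : ℕ, 1 ≤ k → σ (k : ℤ) ≠ 0 := by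
    intro k hk h
    have : σ (k : ℤ) = σ (0 : ℤ) := by rw [h, hσ0]
    have := σ.injective this
    omega
  -- part 1
  have part1 : ∀ i j : ℕ, 1 ≤ i → i ≤ j → j ≤ n → fB n σ j ≤ fB n σ i := by
    intro i j hi hij hjn
    induction j, hij using Nat.le_induction with
    | base => exact le_refl _
    | succ m hm ih =>
      have h1 : fB n σ (m + 1) ≤ fB n σ m :=
        (fB_consec n σ m (le_trans hi hm) (by omega)).1
      exact le_trans h1 (ih (by omega))
  refine ⟨part1, ?_⟩
  intro i j hi hij hjn heq
  -- all consecutive equalities between i and j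
  have hall : ∀ k : ℕ, i ≤ k → k < j → fB n σ k = fB n σ (k + 1) := by
    intro k hik hkj
    have h1 : fB n σ k ≤ fB n σ i := part1 i k hi hik (by omega)
    have h2 : fB n σ j ≤ fB n σ (k + 1) := part1 (k+1) j (by omega) (by omega) hjn
    have h3 : fB n σ (k+1) ≤ fB n σ k :=
      (fB_consec n σ k (le_trans hi hik) (by omega)).1
    omega
  have hstep : ∀ k : ℕ, i ≤ k → k < j →
      σ (k : ℤ) < σ ((k : ℤ) + 1) ∧ (σ (k : ℤ) < 0 ↔ σ ((k : ℤ) + 1) < 0) :=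
    fun k hik hkj =>
      (fB_consec n σ k (le_trans hi hik) (by omega)).2 (hall k hik hkj)
  constructor
  · intro k l hik hkl hlj
    induction l, hkl using Nat.le_induction with
    | base =>
      have h1 := (hstep k hik (by omega)).1
      have hc : ((k : ℤ) + 1) = ((k + 1 : ℕ) : ℤ) := by push_cast; ring
      rw [hc] at h1
      exact h1
    | succ m hm ih =>
      have h1 : σ (m : ℤ) < σ ((m : ℤ) + 1) := (hstep m (by omega) (by omega)).1
      have h2 := ih (by omega)
      have : ((m : ℤ) + 1) = ((m + 1 : ℕ) : ℤ) := by push_cast; ring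
      rw [this] at h1
      exact lt_trans h2 h1
  · intro k hik hkj
    have key : ∀ m : ℕ, i ≤ m → m ≤ j → (σ (m : ℤ) < 0 ↔ σ (i : ℤ) < 0) := by
      intro m him hmj
      induction m, him using Nat.le_induction with
      | base => exact Iff.rfl
      | succ p hp ih =>
        have h1 := (hstep p hp (by omega)).2
        have : ((p : ℤ) + 1) = ((p + 1 : ℕ) : ℤ) := by push_cast; ring
        rw [this] at h1
        exact h1.symm.trans (ih (by omega))
    have hk0 := hne0 k (le_trans hi hik)
    have hi0 := hne0 i hi
    have := key k hik hkj
    constructor <;> intro hh <;> omega
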